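/- Let R be a Noetherian local ring with maximal ideal p and let I be an injective hull of the residue field R/p. Then the functor Hom_R(−, I) is a faithful exact functor on the category of finitely generated R-modules. -/
import Mathlib


open IsLocalRing

/-- `I` is an injective hull of the residue field `k = R/p` of the local ring `(R, p)`:
`I` is an injective `R`-module containing `k` such that every nonzero submodule of `I`
meets (the image of) `k` nontrivially. -/
def IsInjectiveHullOfResidueField (R : Type*) [CommRing R] [IsLocalRing R]
    (I : Type*) [AddCommGroup I] [Module R I] : Prop :=
  Module.Injective R I ∧
  ∃ ι : (R ⧸ maximalIdeal R) →ₗ[R] I, Function.Injective ι ∧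
    ∀ N : Submodule R I, N ≠ ⊥ → N ⊓ LinearMap.range ι ≠ ⊥

/-- **Matlis duality.** Let `R` be a Noetherian local ring with maximal ideal `p` and `I` an
injective hull of the residue field `R/p`.  Then `Hom_R(−, I)` is a faithful exact functor on
finitely generated `R`-modules: it sends injections to surjections, surjections to
injections, exact pairs to exact pairs, and nonzero maps to nonzero maps. -/
theorem matlisDual_faithful_exact
    (R : Type) [CommRing R] [IsLocalRing R] [IsNoetherianRing R]
    (I : Type) [AddCommGroup I] [Module R I]
    (hI : IsInjectiveHullOfResidueField R I) :
    (∀ (A B : Type) [AddCommGroup A] [AddCommGroup B] [Module R A] [Module R B]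
        [Module.Finite R A] [Module.Finite R B] (f : A →ₗ[R] B),
        Function.Injective f → Function.Surjective (LinearMap.lcomp R I f)) ∧
    (∀ (A B : Type) [AddCommGroup A] [AddCommGroup B] [Module R A] [Module R B]
        [Module.Finite R A] [Module.Finite R B] (f : A →ₗ[R] B),
        Function.Surjective f → Function.Injective (LinearMap.lcomp R I f)) ∧
    (∀ (A B C : Type) [AddCommGroup A] [AddCommGroup B] [AddCommGroup C]
        [Module R A] [Module R B] [Module R C]
        [Module.Finite R A] [Module.Finite R B] [Module.Finite R C]
        (f : A →ₗ[R] B) (g : B →ₗ[R] C), Function.Exact f g →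
        Function.Exact (LinearMap.lcomp R I g) (LinearMap.lcomp R I f)) ∧
    (∀ (A B : Type) [AddCommGroup A] [AddCommGroup B] [Module R A] [Module R B]
        [Module.Finite R A] [Module.Finite R B] (f : A →ₗ[R] B),
        f ≠ 0 → LinearMap.lcomp R I f ≠ 0) := by

  obtain ⟨hinj, ι, hιinj, -⟩ := hI
  -- auxiliary: separating functionals
  have sep : ∀ (B : Type) [AddCommGroup B] [Module R B] (b : B), b ≠ 0 →
      ∃ φ : B →ₗ[R] I, φ b ≠ 0 := by
    intro B _ _ b hb
    set t : R →ₗ[R] B := LinearMap.toSpanSingleton R B b with ht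
    have hK : LinearMap.ker t ≤ maximalIdeal R := by
      apply le_maximalIdeal
      intro h
      have : (1 : R) ∈ LinearMap.ker t := h ▸ Submodule.mem_top
      simp [ht, LinearMap.mem_ker, LinearMap.toSpanSingleton_apply] at this
      exact hb this
    let q : (R ⧸ LinearMap.ker t) →ₗ[R] R ⧸ maximalIdeal R :=
      Submodule.mapQ _ _ LinearMap.id (by simpa using hK)
    let g : LinearMap.range t →ₗ[R] I :=
      (ι.comp q).comp (t.quotKerEquivRange.symm : _ →ₗ[R] _)
    obtain ⟨φ, hφ⟩ := hinj.out (LinearMap.range t).subtype Subtype.coe_injective g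
    have hbmem : b ∈ LinearMap.range t := ⟨1, by simp [ht]⟩
    refine ⟨φ, ?_⟩
    have h1 : φ b = g ⟨b, hbmem⟩ := hφ ⟨b, hbmem⟩
    have h2 : t.quotKerEquivRange.symm ⟨b, hbmem⟩ = (LinearMap.ker t).mkQ 1 := by
      have : t 1 = b := by simp [ht]
      rw [show (⟨b, hbmem⟩ : LinearMap.range t) = ⟨t 1, ⟨1, rfl⟩⟩ by simp [this]]
      exact t.quotKerEquivRange_symm_apply_image 1 ⟨1, rfl⟩
    rw [h1]
    show ι (q (t.quotKerEquivRange.symm ⟨b, hbmem⟩)) ≠ 0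
    rw [h2]
    have hq1 : q ((LinearMap.ker t).mkQ 1) = Submodule.Quotient.mk 1 := rfl
    rw [hq1]
    intro hc
    rw [← map_zero ι] at hc
    have := hιinj hc
    have h1p : (1 : R) ∈ maximalIdeal R := by
      simpa [Submodule.Quotient.mk_eq_zero] using this
    exact (maximalIdeal.isMaximal R).ne_top (Ideal.eq_top_of_isUnit_mem _ h1p isUnit_one)
  refine ⟨?_, ?_, ?_, ?_⟩
  · intro A B _ _ _ _ _ _ f hf ψ
    obtain ⟨φ, hφ⟩ := hinj.out f hf ψ
    exact ⟨φ, LinearMap.ext hφ⟩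
  · intro A B _ _ _ _ _ _ f hf ψ₁ ψ₂ h
    ext c
    obtain ⟨b, rfl⟩ := hf c
    exact congrFun (congrArg DFunLike.coe h) b
  · intro A B C _ _ _ _ _ _ _ _ _ f g hfg φ
    constructor
    · intro hφ
      -- φ vanishes on range f = ker g; factor through range g and extend
      have hker : LinearMap.ker g ≤ LinearMap.ker φ := by
        intro b hb
        obtain ⟨a, rfl⟩ := (hfg b).1 hb
        exact congrFun (congrArg DFunLike.coe hφ) a
      let φ' : (B ⧸ LinearMap.ker g) →ₗ[R] I := (LinearMap.ker g).liftQ φ hker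
      let g' : LinearMap.range g →ₗ[R] I :=
        φ'.comp (g.quotKerEquivRange.symm : _ →ₗ[R] _)
      obtain ⟨ψ, hψ⟩ := hinj.out (LinearMap.range g).subtype Subtype.coe_injective g'
      refine ⟨ψ, ?_⟩
      ext b
      have := hψ ⟨g b, ⟨b, rfl⟩⟩
      simp only [Submodule.coe_subtype] at this
      show ψ (g b) = φ b
      rw [this]
      show φ' (g.quotKerEquivRange.symm ⟨g b, ⟨b, rfl⟩⟩) = φ b
      rw [g.quotKerEquivRange_symm_apply_image b ⟨b, rfl⟩]
      rfl
    · rintro ⟨ψ, rfl⟩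
      ext a
      show ψ (g (f a)) = 0
      rw [(hfg (f a)).2 ⟨a, rfl⟩, map_zero]
  · intro A B _ _ _ _ _ _ f hf
    have : ∃ a, f a ≠ 0 := by
      by_contra h
      push_neg at h
      exact hf (LinearMap.ext h)
    obtain ⟨a, ha⟩ := this
    obtain ⟨φ, hφ⟩ := sep B (f a) ha
    intro hc
    have : (LinearMap.lcomp R I f) φ = 0 := by rw [hc]; rfl
    exact hφ (congrFun (congrArg DFunLike.coe this) a)
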